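/- Let ρ ≥ 0, C₁ > 0, C₂ ∈ ℝ, and let W : {q ∈ ℝ^d : ‖q‖ > ρ} → ℝ satisfy W(q) ≥ C₁/(‖q‖ − ρ) − C₂ for all such q. Let γ : [0, T] → ℝ^d be Lipschitz continuous with ‖γ(t)‖ > ρ for t ≠ t_c and ‖γ(t_c)‖ = ρ for some t_c ∈ (0, T). Then the integral ∫₀^T W(γ(t)) dt diverges to +∞ (i.e., the lower-bound function C₁/(‖γ(t)‖ − ρ) − C₂ is not Lebesgue integrable on [0,T]). -/

import Mathlib

open MeasureTheory Set

/-- If the repelling potential satisfies `W(q) ≥ C₁/(‖q‖ − ρ) − C₂` for `‖q‖ > ρ`, and a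
Lipschitz path `γ` on `[0,T]` reaches distance `ρ` exactly at an interior time `t_c`, then
the averaged interaction integral diverges: the lower-bound function
`t ↦ C₁/(‖γ(t)‖ − ρ) − C₂` is not Lebesgue integrable on `[0,T]`. -/
theorem collision_integral_diverges (d : ℕ)
    (ρ C₁ C₂ T : ℝ) (hρ : 0 ≤ ρ) (hC₁ : 0 < C₁) (hT : 0 < T)
    (W : EuclideanSpace ℝ (Fin d) → ℝ)
    (hW : ∀ q, ρ < ‖q‖ → C₁ / (‖q‖ - ρ) - C₂ ≤ W q)
    (γ : ℝ → EuclideanSpace ℝ (Fin d)) (L : NNReal)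
    (hγ : LipschitzOnWith L γ (Icc 0 T))
    (tc : ℝ) (htc : tc ∈ Ioo 0 T)
    (hcol : ‖γ tc‖ = ρ)
    (hsep : ∀ t ∈ Icc 0 T, t ≠ tc → ρ < ‖γ t‖) :
    ¬ IntegrableOn (fun t => C₁ / (‖γ t‖ - ρ) - C₂) (Icc 0 T) volume := by
  intro h
  obtain ⟨htc0, htcT⟩ := htc
  have htcmem : tc ∈ Icc (0:ℝ) T := ⟨le_of_lt htc0, le_of_lt htcT⟩
  -- key Lipschitz bound: for t ∈ Icc 0 T, ‖γ t‖ - ρ ≤ L * |t - tc|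
  have key : ∀ t ∈ Icc (0:ℝ) T, ‖γ t‖ - ρ ≤ (L : ℝ) * |t - tc| := by
    intro t ht
    have h1 : ‖γ t‖ - ‖γ tc‖ ≤ ‖γ t - γ tc‖ := norm_sub_norm_le _ _
    have h2 : dist (γ t) (γ tc) ≤ (L : ℝ) * dist t tc := hγ.dist_le_mul t ht tc htcmem
    rw [dist_eq_norm] at h2
    rw [hcol] at h1
    calc ‖γ t‖ - ρ ≤ ‖γ t - γ tc‖ := h1
      _ ≤ (L : ℝ) * dist t tc := h2
      _ = (L : ℝ) * |t - tc| := by rw [Real.dist_eq]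
  -- L > 0
  have hL : 0 < (L : ℝ) := by
    have hTmem : T ∈ Icc (0:ℝ) T := ⟨le_of_lt hT, le_refl T⟩
    have h1 := hsep T hTmem (ne_of_gt htcT)
    have h2 := key T hTmem
    by_contra hL0
    push_neg at hL0
    have : (L : ℝ) * |T - tc| ≤ 0 :=
      mul_nonpos_of_nonpos_of_nonneg hL0 (abs_nonneg _)
    linarith
  -- g := C₁ / (‖γ t‖ - ρ) is integrable on Icc 0 T
  have hg : IntegrableOn (fun t => C₁ / (‖γ t‖ - ρ)) (Icc 0 T) volume := by
    have hc : IntegrableOn (fun _ : ℝ => C₂) (Icc 0 T) volume :=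
      integrableOn_const measure_Icc_lt_top.ne
    have := h.add hc
    exact this.congr (Filter.Eventually.of_forall fun t => by simp)
  have hg' : IntegrableOn (fun t => C₁ / (‖γ t‖ - ρ)) (Ioc tc T) volume :=
    hg.mono_set (fun t ht => ⟨le_trans (le_of_lt htc0) (le_of_lt ht.1), ht.2⟩)
  -- comparison function
  have hmeas : AEStronglyMeasurable (fun t => C₁ / ((L : ℝ) * (t - tc))) (volume.restrict (Ioc tc T)) := by
    refine ContinuousOn.aestronglyMeasurable ?_ measurableSet_Ioc
    refine ContinuousOn.div continuousOn_const
      (Continuous.continuousOn (by continuity)) ?_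
    intro t ht
    exact ne_of_gt (mul_pos hL (sub_pos.2 ht.1))
  have hint : IntegrableOn (fun t => C₁ / ((L : ℝ) * (t - tc))) (Ioc tc T) volume := by
    refine MeasureTheory.Integrable.mono hg' hmeas ?_
    refine (ae_restrict_iff' measurableSet_Ioc).2 (Filter.Eventually.of_forall ?_)
    intro t ht
    have ht' : t ∈ Icc (0:ℝ) T := ⟨le_trans (le_of_lt htc0) (le_of_lt ht.1), ht.2⟩
    have hpos : 0 < ‖γ t‖ - ρ := sub_pos.2 (hsep t ht' (ne_of_gt ht.1))
    have habs : |t - tc| = t - tc := abs_of_pos (sub_pos.2 ht.1)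
    have hle : ‖γ t‖ - ρ ≤ (L : ℝ) * (t - tc) := by
      have := key t ht'; rwa [habs] at this
    have hd : 0 < (L : ℝ) * (t - tc) := mul_pos hL (sub_pos.2 ht.1)
    have h1 : C₁ / ((L : ℝ) * (t - tc)) ≤ C₁ / (‖γ t‖ - ρ) :=
      div_le_div_of_nonneg_left (le_of_lt hC₁) hpos hle
    have h2 : 0 ≤ C₁ / ((L : ℝ) * (t - tc)) := div_nonneg (le_of_lt hC₁) (le_of_lt hd)
    rw [Real.norm_eq_abs, Real.norm_eq_abs, abs_of_nonneg h2]
    exact le_trans h1 (le_abs_self _)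
  -- deduce integrability of (t - tc)⁻¹ on Ioc tc T
  have hinv : IntegrableOn (fun t => (t - tc)⁻¹) (Ioc tc T) volume := by
    have h2 : IntegrableOn (fun x => (L : ℝ) / C₁ * (C₁ / ((L : ℝ) * (x - tc)))) (Ioc tc T) volume :=
      hint.const_mul ((L : ℝ) / C₁)
    refine h2.congr_fun ?_ measurableSet_Ioc
    intro t ht
    field_simp
  have : IntervalIntegrable (fun t => (t - tc)⁻¹) volume tc T := by
    rw [intervalIntegrable_iff, uIoc_of_le (le_of_lt htcT)]
    exact hinv
  rw [intervalIntegrable_sub_inv_iff] at this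
  rcases this with h1 | h2
  · exact (ne_of_lt htcT) h1
  · exact h2 (left_mem_uIcc)
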